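/- Euler's identity: Σ_{n≥0} z^n / (p)_n = 1 / (z; p)_∞ as formal power series in z and p, where (p)_n = Π_{k=1}^n (1 - p^k) and (z; p)_∞ = Π_{s=0}^∞ (1 - z p^s). -/

import Mathlib

open Finset Filter Topology

/-- `1 - a ≠ 0` when `‖a‖ < 1`. -/
lemma euler_aux_ne_zero {a : ℂ} (ha : ‖a‖ < 1) : 1 - a ≠ 0 := by
  intro h
  have : a = 1 := by linear_combination -h
  rw [this] at ha; norm_num at ha

/-- Uniform positive lower bound on `‖(p)_n‖`. -/
lemma euler_aux_lb (p : ℂ) (hp : ‖p‖ < 1) :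
    ∃ c : ℝ, 0 < c ∧ ∀ n : ℕ, c ≤ ‖∏ k ∈ Finset.range n, (1 - p ^ (k + 1))‖ := by
  set t : ℝ := ‖p‖ with ht
  have ht0 : 0 ≤ t := norm_nonneg p
  have hxk : ∀ k : ℕ, t ^ (k + 1) < 1 := fun k => pow_lt_one₀ ht0 hp k.succ_ne_zero
  have hxk0 : ∀ k : ℕ, 0 ≤ t ^ (k + 1) := fun k => pow_nonneg ht0 _
  have hpos : ∀ k : ℕ, 0 < 1 - t ^ (k + 1) := fun k => by linarith [hxk k]
  set L : ℕ → ℝ := fun k => Real.log (1 - t ^ (k + 1)) with hL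
  have hLnonpos : ∀ k, L k ≤ 0 := fun k =>
    Real.log_nonpos (by linarith [hpos k]) (by linarith [hxk0 k])
  have hLsum : Summable L := by
    apply Summable.of_norm_bounded (g := fun k => ((1 - t)⁻¹ * t) * t ^ k)
    · exact (summable_geometric_of_lt_one ht0 hp).mul_left _
    · intro k
      have h1 : ‖L k‖ = Real.log (1 - t ^ (k + 1))⁻¹ := by
        rw [Real.norm_eq_abs, abs_of_nonpos (hLnonpos k), Real.log_inv]
      rw [h1]
      have h2 : Real.log (1 - t ^ (k + 1))⁻¹ ≤ (1 - t ^ (k + 1))⁻¹ - 1 :=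
        Real.log_le_sub_one_of_pos (inv_pos.mpr (hpos k))
      have h3 : (1 - t ^ (k + 1))⁻¹ - 1 = t ^ (k + 1) / (1 - t ^ (k + 1)) := by
        field_simp [(hpos k).ne']
        ring
      have h4 : t ^ (k + 1) / (1 - t ^ (k + 1)) ≤ t ^ (k + 1) / (1 - t) := by
        apply div_le_div_of_nonneg_left (hxk0 k) (by linarith) _
        have : t ^ (k + 1) ≤ t := by
          calc t ^ (k + 1) ≤ t ^ 1 := pow_le_pow_of_le_one ht0 hp.le (by omega)
          _ = t := pow_one t
        linarith
      have h5 : t ^ (k + 1) / (1 - t) = ((1 - t)⁻¹ * t) * t ^ k := by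
        rw [pow_succ]; field_simp
      linarith
  refine ⟨Real.exp (∑' k, L k), Real.exp_pos _, fun n => ?_⟩
  have key : ∑' k, L k ≤ ∑ k ∈ Finset.range n, L k := by
    have := (Summable.sum_add_tsum_nat_add n hLsum).symm
    have htail : ∑' k, L (k + n) ≤ 0 := tsum_nonpos (fun k => hLnonpos _)
    linarith
  calc Real.exp (∑' k, L k) ≤ Real.exp (∑ k ∈ Finset.range n, L k) := Real.exp_le_exp.mpr key
    _ = ∏ k ∈ Finset.range n, (1 - t ^ (k + 1)) := by
        rw [Real.exp_sum]
        exact Finset.prod_congr rfl (fun k _ => Real.exp_log (hpos k))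
    _ ≤ ∏ k ∈ Finset.range n, ‖1 - p ^ (k + 1)‖ := by
        apply Finset.prod_le_prod (fun k _ => (hpos k).le)
        intro k _
        calc 1 - t ^ (k + 1) = ‖(1:ℂ)‖ - ‖p ^ (k + 1)‖ := by
              simp [ht, norm_pow]
          _ ≤ ‖1 - p ^ (k + 1)‖ := norm_sub_norm_le _ _
    _ = ‖∏ k ∈ Finset.range n, (1 - p ^ (k + 1))‖ := (norm_prod _ _).symm

section main
variable {p : ℂ} (hp : ‖p‖ < 1)

/-- Summability of Euler's series. -/
lemma euler_aux_summable (hp : ‖p‖ < 1) {w : ℂ} (hw : ‖w‖ < 1) :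
    Summable (fun n : ℕ => w ^ n / (∏ k ∈ Finset.range n, (1 - p ^ (k + 1)))) := by
  obtain ⟨c, hc, hcb⟩ := euler_aux_lb p hp
  apply Summable.of_norm_bounded (g := fun n => c⁻¹ * ‖w‖ ^ n)
  · exact (summable_geometric_of_lt_one (norm_nonneg w) hw).mul_left _
  · intro n
    rw [norm_div, norm_pow]
    rw [div_le_iff₀ (lt_of_lt_of_le hc (hcb n))]
    calc ‖w‖ ^ n = c⁻¹ * ‖w‖ ^ n * c := by field_simp
      _ ≤ c⁻¹ * ‖w‖ ^ n * ‖∏ k ∈ Finset.range n, (1 - p ^ (k + 1))‖ := by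
          apply mul_le_mul_of_nonneg_left (hcb n) (by positivity)

/-- The one-step functional equation. -/
lemma euler_aux_step (hp : ‖p‖ < 1) {w : ℂ} (hw : ‖w‖ < 1) :
    (1 - w) * ∑' n : ℕ, w ^ n / (∏ k ∈ Finset.range n, (1 - p ^ (k + 1))) =
      ∑' n : ℕ, (w * p) ^ n / (∏ k ∈ Finset.range n, (1 - p ^ (k + 1))) := by
  set Q : ℕ → ℂ := fun n => ∏ k ∈ Finset.range n, (1 - p ^ (k + 1)) with hQ
  have hwp : ‖w * p‖ < 1 := by
    rw [norm_mul]
    calc ‖w‖ * ‖p‖ ≤ ‖w‖ * 1 := by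
          exact mul_le_mul_of_nonneg_left hp.le (norm_nonneg w)
      _ = ‖w‖ := mul_one _
      _ < 1 := hw
  have hS := euler_aux_summable hp hw
  have hSp := euler_aux_summable hp hwp
  have hQsucc : ∀ n : ℕ, Q (n + 1) = Q n * (1 - p ^ (n + 1)) := fun n =>
    Finset.prod_range_succ _ n
  have hQne : ∀ n : ℕ, (1 - p ^ (n + 1)) ≠ 0 := fun n =>
    euler_aux_ne_zero (by rw [norm_pow]; exact pow_lt_one₀ (norm_nonneg p) hp n.succ_ne_zero)
  have key : (∑' n : ℕ, w ^ n / Q n) - (∑' n : ℕ, (w * p) ^ n / Q n)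
      = w * ∑' n : ℕ, w ^ n / Q n := by
    rw [← Summable.tsum_sub hS hSp, ← tsum_mul_left]
    have h0 : (fun n : ℕ => w ^ n / Q n - (w * p) ^ n / Q n) =
        fun n : ℕ => (w ^ n * (1 - p ^ n)) / Q n := by
      funext n; rw [mul_pow]; ring
    rw [h0]
    have hsum2 : Summable (fun n : ℕ => (w ^ n * (1 - p ^ n)) / Q n) := by
      rw [← h0]; exact hS.sub hSp
    rw [Summable.tsum_eq_zero_add hsum2]
    simp only [pow_zero, sub_self, mul_zero, zero_div, zero_add]
    apply tsum_congr
    intro n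
    rw [hQsucc n]
    rw [mul_comm (Q n) _, ← div_div, mul_div_assoc]
    rw [div_self (hQne n), mul_one, pow_succ, mul_comm (w ^ n) w, mul_div_assoc]
  linear_combination key

/-- Iterated functional equation. -/
lemma euler_aux_iter (hp : ‖p‖ < 1) {z : ℂ} (hz : ‖z‖ < 1) (N : ℕ) :
    (∑' n : ℕ, z ^ n / (∏ k ∈ Finset.range n, (1 - p ^ (k + 1)))) *
      (∏ s ∈ Finset.range N, (1 - z * p ^ s)) =
    ∑' n : ℕ, (z * p ^ N) ^ n / (∏ k ∈ Finset.range n, (1 - p ^ (k + 1))) := by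
  induction N with
  | zero => simp
  | succ N ih =>
    have hzN : ‖z * p ^ N‖ < 1 := by
      rw [norm_mul, norm_pow]
      calc ‖z‖ * ‖p‖ ^ N ≤ ‖z‖ * 1 := by
            exact mul_le_mul_of_nonneg_left (pow_le_one₀ (norm_nonneg p) hp.le) (norm_nonneg z)
        _ = ‖z‖ := mul_one _
        _ < 1 := hz
    rw [Finset.prod_range_succ, ← mul_assoc, ih, mul_comm, euler_aux_step hp hzN]
    congr 1
    funext n
    congr 2
    ring

end main

/-- Euler's identity: `Σ_n z^n/(p)_n = 1/(z;p)_∞`. -/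
theorem statement3 (p z : ℂ) (hp : ‖p‖ < 1) (hz : ‖z‖ < 1) :
    ∑' n : ℕ, z ^ n / (∏ k ∈ Finset.range n, (1 - p ^ (k + 1))) =
    1 / ∏' s : ℕ, (1 - z * p ^ s) := by
  set S : ℂ := ∑' n : ℕ, z ^ n / (∏ k ∈ Finset.range n, (1 - p ^ (k + 1))) with hSdef
  set P : ℂ := ∏' s : ℕ, (1 - z * p ^ s) with hPdef
  obtain ⟨c, hc, hcb⟩ := euler_aux_lb p hp
  have hzps : ∀ s : ℕ, ‖z * p ^ s‖ ≤ ‖z‖ := fun s => by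
    rw [norm_mul, norm_pow]
    calc ‖z‖ * ‖p‖ ^ s ≤ ‖z‖ * 1 :=
          mul_le_mul_of_nonneg_left (pow_le_one₀ (norm_nonneg p) hp.le) (norm_nonneg z)
      _ = ‖z‖ := mul_one _
  -- Multipliability of the infinite product
  have hM : Multipliable (fun s : ℕ => 1 - z * p ^ s) := by
    apply Complex.multipliable_of_summable_log
    apply Summable.of_norm_bounded (g :=
      (fun s => ((‖z‖ ^ 2 * (1 - ‖z‖)⁻¹ / 2 + ‖z‖)) * ‖p‖ ^ s))
    · exact (summable_geometric_of_lt_one (norm_nonneg p) hp).mul_left _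
    · intro s
      show ‖Complex.log (1 - z * p ^ s)‖ ≤ (‖z‖ ^ 2 * (1 - ‖z‖)⁻¹ / 2 + ‖z‖) * ‖p‖ ^ s
      have hns : ‖-(z * p ^ s)‖ < 1 := by
        rw [norm_neg]; exact lt_of_le_of_lt (hzps s) hz
      have h1 : (1 : ℂ) - z * p ^ s = 1 + -(z * p ^ s) := by ring
      rw [h1]
      refine le_trans (Complex.norm_log_one_add_le hns) ?_
      rw [norm_neg, norm_mul, norm_pow]
      have hzz : ‖z‖ * ‖p‖ ^ s ≤ ‖z‖ := by
        rw [← norm_pow, ← norm_mul]; exact hzps s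
      have hp1 : ‖p‖ ^ s ≤ 1 := pow_le_one₀ (norm_nonneg p) hp.le
      have h2 : (1 - ‖z‖ * ‖p‖ ^ s)⁻¹ ≤ (1 - ‖z‖)⁻¹ := by
        apply inv_anti₀ (by linarith) (by linarith)
      have h3 : (‖z‖ * ‖p‖ ^ s) ^ 2 ≤ ‖z‖ ^ 2 * ‖p‖ ^ s := by
        have : (‖z‖ * ‖p‖ ^ s) ^ 2 = (‖z‖ ^ 2 * ‖p‖ ^ s) * ‖p‖ ^ s := by ring
        rw [this]
        calc (‖z‖ ^ 2 * ‖p‖ ^ s) * ‖p‖ ^ s ≤ (‖z‖ ^ 2 * ‖p‖ ^ s) * 1 :=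
              mul_le_mul_of_nonneg_left hp1 (by positivity)
          _ = ‖z‖ ^ 2 * ‖p‖ ^ s := mul_one _
      have h4 : (‖z‖ * ‖p‖ ^ s) ^ 2 * (1 - ‖z‖ * ‖p‖ ^ s)⁻¹ / 2
          ≤ ‖z‖ ^ 2 * ‖p‖ ^ s * (1 - ‖z‖)⁻¹ / 2 := by
        apply div_le_div_of_nonneg_right _ (by norm_num)
        exact mul_le_mul h3 h2 (inv_nonneg.mpr (by linarith)) (by positivity)
      calc (‖z‖ * ‖p‖ ^ s) ^ 2 * (1 - ‖z‖ * ‖p‖ ^ s)⁻¹ / 2 + ‖z‖ * ‖p‖ ^ s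
          ≤ ‖z‖ ^ 2 * ‖p‖ ^ s * (1 - ‖z‖)⁻¹ / 2 + ‖z‖ * ‖p‖ ^ s := by linarith
        _ = (‖z‖ ^ 2 * (1 - ‖z‖)⁻¹ / 2 + ‖z‖) * ‖p‖ ^ s := by ring
  -- Partial products tend to P
  have hProd : Tendsto (fun N => ∏ s ∈ Finset.range N, (1 - z * p ^ s)) atTop (𝓝 P) :=
    hM.hasProd.tendsto_prod_nat
  -- LHS of iterated identity tends to S * P
  have hLHS : Tendsto (fun N => S * ∏ s ∈ Finset.range N, (1 - z * p ^ s)) atTop (𝓝 (S * P)) :=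
    hProd.const_mul S
  -- RHS tends to 1
  have hRHS : Tendsto (fun N : ℕ =>
      ∑' n : ℕ, (z * p ^ N) ^ n / (∏ k ∈ Finset.range n, (1 - p ^ (k + 1)))) atTop (𝓝 1) := by
    have hbound : ∀ N : ℕ,
        ‖(∑' n : ℕ, (z * p ^ N) ^ n / (∏ k ∈ Finset.range n, (1 - p ^ (k + 1)))) - 1‖
          ≤ (c⁻¹ * (1 - ‖z‖)⁻¹ * ‖z‖) * ‖p‖ ^ N := by
      intro N
      set w : ℂ := z * p ^ N with hw
      have hwz : ‖w‖ ≤ ‖z‖ := hzps N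
      have hw1 : ‖w‖ < 1 := lt_of_le_of_lt hwz hz
      have hsum := euler_aux_summable hp (w := w) hw1
      have h0 : (∑' n : ℕ, w ^ n / (∏ k ∈ Finset.range n, (1 - p ^ (k + 1))))
          = 1 + ∑' n : ℕ, w ^ (n + 1) / (∏ k ∈ Finset.range (n + 1), (1 - p ^ (k + 1))) := by
        rw [Summable.tsum_eq_zero_add hsum]; simp
      rw [h0, add_sub_cancel_left]
      have hsum1 : Summable (fun n : ℕ =>
          w ^ (n + 1) / (∏ k ∈ Finset.range (n + 1), (1 - p ^ (k + 1)))) :=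
        hsum.comp_injective (add_left_injective 1)
      refine le_trans (norm_tsum_le_tsum_norm (hsum1.norm)) ?_
      have hgsum : Summable (fun n : ℕ => (c⁻¹ * ‖z‖ * ‖p‖ ^ N) * ‖z‖ ^ n) :=
        (summable_geometric_of_lt_one (norm_nonneg z) hz).mul_left _
      refine le_trans (Summable.tsum_le_tsum (fun n => ?_) hsum1.norm hgsum) ?_
      · rw [norm_div, norm_pow]
        have hc' : 0 < ‖∏ k ∈ Finset.range (n + 1), (1 - p ^ (k + 1))‖ :=
          lt_of_lt_of_le hc (hcb (n + 1))
        rw [div_le_iff₀ hc']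
        have hwn : ‖w‖ ^ (n + 1) ≤ (‖z‖ * ‖p‖ ^ N) * ‖z‖ ^ n := by
          have he : ‖w‖ ^ (n + 1) = ‖w‖ * ‖w‖ ^ n := by ring
          have hwe : ‖w‖ = ‖z‖ * ‖p‖ ^ N := by rw [hw, norm_mul, norm_pow]
          rw [he]
          exact mul_le_mul hwe.le (pow_le_pow_left₀ (norm_nonneg w) hwz n)
            (by positivity) (by positivity)
        calc ‖w‖ ^ (n + 1) ≤ (‖z‖ * ‖p‖ ^ N) * ‖z‖ ^ n := hwn
          _ = ((c⁻¹ * ‖z‖ * ‖p‖ ^ N) * ‖z‖ ^ n) * c := by field_simp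
          _ ≤ ((c⁻¹ * ‖z‖ * ‖p‖ ^ N) * ‖z‖ ^ n) *
              ‖∏ k ∈ Finset.range (n + 1), (1 - p ^ (k + 1))‖ :=
            mul_le_mul_of_nonneg_left (hcb (n + 1)) (by positivity)
      · rw [tsum_mul_left, tsum_geometric_of_lt_one (norm_nonneg z) hz]
        apply le_of_eq; ring
    have hzero : Tendsto (fun N : ℕ => (c⁻¹ * (1 - ‖z‖)⁻¹ * ‖z‖) * ‖p‖ ^ N) atTop (𝓝 0) := by
      rw [show (0:ℝ) = (c⁻¹ * (1 - ‖z‖)⁻¹ * ‖z‖) * 0 by ring]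
      exact (tendsto_pow_atTop_nhds_zero_of_lt_one (norm_nonneg p) hp).const_mul _
    have := squeeze_zero_norm hbound hzero
    have h1 := this.add_const 1
    simpa using h1
  -- combine
  have heq : (fun N => S * ∏ s ∈ Finset.range N, (1 - z * p ^ s)) =
      fun N : ℕ => ∑' n : ℕ, (z * p ^ N) ^ n / (∏ k ∈ Finset.range n, (1 - p ^ (k + 1))) := by
    funext N; exact euler_aux_iter hp hz N
  rw [heq] at hLHS
  have hSP : S * P = 1 := tendsto_nhds_unique hLHS hRHS
  have hPne : P ≠ 0 := by
    intro h; rw [h, mul_zero] at hSP; exact zero_ne_one hSP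
  rw [eq_div_iff hPne]
  exact hSP
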